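/- Let p be a real number, α > 0, and a, ω, x ∈ ℝ with ω < x and a < x. Then the (α,ω)-derivative of the function t ↦ (t − a)^p at x exists and equals (p/α)·(x − ω)^(1−α)·(x − a)^(p−1); that is, ((y − a)^p − (x − a)^p)/((y − ω)^α − (x − ω)^α) tends to (p/α)·(x − ω)^(1−α)·(x − a)^(p−1) as y tends to x along the punctured neighborhood filter 𝓝[≠] x. -/

import Mathlib

open Filter Topology

theorem alpha_omega_deriv_rpow (p α a ω x : ℝ)
    (hα : 0 < α) (hωx : ω < x) (hax : a < x) :
    Tendsto (fun y => ((y - a) ^ p - (x - a) ^ p) / ((y - ω) ^ α - (x - ω) ^ α))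
      (𝓝[≠] x) (𝓝 (p / α * (x - ω) ^ (1 - α) * (x - a) ^ (p - 1))) := by
  have hxa : (0:ℝ) < x - a := by linarith
  have hxω : (0:ℝ) < x - ω := by linarith
  have hf : HasDerivAt (fun y : ℝ => (y - a) ^ p) (p * (x - a) ^ (p - 1)) x := by
    have h1 : HasDerivAt (fun y : ℝ => y - a) 1 x := (hasDerivAt_id x).sub_const a
    have h2 := (Real.hasDerivAt_rpow_const (x := x - a) (p := p) (Or.inl hxa.ne')).comp x h1
    simpa [Function.comp_def] using h2
  have hg : HasDerivAt (fun y : ℝ => (y - ω) ^ α) (α * (x - ω) ^ (α - 1)) x := by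
    have h1 : HasDerivAt (fun y : ℝ => y - ω) 1 x := (hasDerivAt_id x).sub_const ω
    have h2 := (Real.hasDerivAt_rpow_const (x := x - ω) (p := α) (Or.inl hxω.ne')).comp x h1
    simpa [Function.comp_def] using h2
  have hfs := hasDerivAt_iff_tendsto_slope.mp hf
  have hgs := hasDerivAt_iff_tendsto_slope.mp hg
  have hgne : α * (x - ω) ^ (α - 1) ≠ 0 :=
    mul_ne_zero hα.ne' (Real.rpow_pos_of_pos hxω _).ne'
  have hdiv := hfs.div hgs hgne
  have heq : ∀ y ∈ ({x}ᶜ : Set ℝ),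
      slope (fun y : ℝ => (y - a) ^ p) x y / slope (fun y : ℝ => (y - ω) ^ α) x y
        = ((y - a) ^ p - (x - a) ^ p) / ((y - ω) ^ α - (x - ω) ^ α) := by
    intro y hy
    have hyx : y - x ≠ 0 := sub_ne_zero.mpr hy
    simp only [slope_def_field]
    field_simp
  have := hdiv.congr' (eventually_nhdsWithin_of_forall heq)
  convert this using 2
  rw [show (1-α) = -(α-1) by ring, Real.rpow_neg hxω.le]
  field_simp
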